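/- Let n≥1 be an integer and define Q(u) = (u^{2n}/(1+u^{2n})) e^u − ε. For all sufficiently small ε>0, letting u₁∈(ln ε, 1+ln ε), u₂∈(−2ε^{1/(2n)}, −√ε), u₃∈(√ε, ε^{1/(2n)}) denote the three real zeros of Q, one has Q'(u₁) > 0, Q'(u₂) < 0, and Q'(u₃) > 0. -/

import Mathlib

noncomputable def Q (n : ℕ) (ε u : ℝ) : ℝ :=
  u ^ (2 * n) / (1 + u ^ (2 * n)) * Real.exp u - ε

lemma Q_deriv (n : ℕ) (ε u : ℝ) :
    deriv (Q n ε) u =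
      Real.exp u * ((2 * n) * u ^ (2 * n - 1) + u ^ (2 * n) * (1 + u ^ (2 * n)))
        / (1 + u ^ (2 * n)) ^ 2 := by
  have hpow : (0:ℝ) ≤ u ^ (2 * n) := (even_two_mul n).pow_nonneg u
  have hD : (1:ℝ) + u ^ (2 * n) ≠ 0 := by nlinarith
  have h1 : HasDerivAt (fun x : ℝ => x ^ (2 * n)) ((2 * n : ℕ) * u ^ (2 * n - 1)) u :=
    hasDerivAt_pow _ u
  have h2 : HasDerivAt (fun x : ℝ => 1 + x ^ (2 * n)) ((2 * n : ℕ) * u ^ (2 * n - 1)) u := by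
    simpa using h1.const_add 1
  have h4 := ((h1.div h2 hD).mul (Real.hasDerivAt_exp u)).sub_const ε
  have h5 : HasDerivAt (Q n ε)
      (Real.exp u * ((2 * n) * u ^ (2 * n - 1) + u ^ (2 * n) * (1 + u ^ (2 * n)))
        / (1 + u ^ (2 * n)) ^ 2) u := by
    convert h4 using 1
    · rfl
    · rfl
    · rfl
    simp only [Pi.div_apply]
    push_cast
    field_simp
    ring
  exact h5.deriv

theorem stmt14 (n : ℕ) (hn : 1 ≤ n) :
    ∃ ε₀ : ℝ, 0 < ε₀ ∧ ∀ ε : ℝ, 0 < ε → ε < ε₀ →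
      ∀ u₁ u₂ u₃ : ℝ,
        u₁ ∈ Set.Ioo (Real.log ε) (1 + Real.log ε) →
        u₂ ∈ Set.Ioo (-2 * ε ^ (1 / (2 * (n : ℝ)))) (-Real.sqrt ε) →
        u₃ ∈ Set.Ioo (Real.sqrt ε) (ε ^ (1 / (2 * (n : ℝ)))) →
        Q n ε u₁ = 0 → Q n ε u₂ = 0 → Q n ε u₃ = 0 →
        0 < deriv (Q n ε) u₁ ∧ deriv (Q n ε) u₂ < 0 ∧ 0 < deriv (Q n ε) u₃ := by
  have hn' : (1:ℝ) ≤ (n:ℝ) := by exact_mod_cast hn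
  refine ⟨min (Real.exp (-(2 * n + 1))) ((1/2) ^ (2 * n)), by positivity, ?_⟩
  intro ε hε hεlt u₁ u₂ u₃ h1 h2 h3 _ _ _
  obtain ⟨h1l, h1r⟩ := h1
  obtain ⟨h2l, h2r⟩ := h2
  obtain ⟨h3l, h3r⟩ := h3
  have hε1 : ε < Real.exp (-(2 * n + 1)) := lt_of_lt_of_le hεlt (min_le_left _ _)
  have hε2 : ε < (1/2 : ℝ) ^ (2 * n) := lt_of_lt_of_le hεlt (min_le_right _ _)
  -- key facts about u₁ : u₁ < -(2n+... )
  have hlog : Real.log ε < -(2 * n + 1) := by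
    calc Real.log ε < Real.log (Real.exp (-(2 * n + 1))) :=
          Real.log_lt_log hε hε1
      _ = -(2 * n + 1) := Real.log_exp _
  have hu1 : u₁ < -(2 * (n:ℝ)) := by linarith
  -- u₂ ∈ (-1, 0)
  have hrpow : ε ^ (1 / (2 * (n:ℝ))) < 1/2 := by
    have h2n : (0:ℝ) < 2 * (n:ℝ) := by linarith
    have := Real.rpow_lt_rpow hε.le hε2 (by positivity : (0:ℝ) < 1 / (2 * (n:ℝ)))
    calc ε ^ (1 / (2 * (n:ℝ))) < ((1/2 : ℝ) ^ (2 * n)) ^ (1 / (2 * (n:ℝ))) := this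
      _ = (1/2 : ℝ) ^ ((2 * n : ℕ) * (1 / (2 * (n:ℝ)))) := by
          rw [← Real.rpow_natCast (1/2 : ℝ) (2 * n), ← Real.rpow_mul (by norm_num)]
      _ = (1/2 : ℝ) ^ (1:ℝ) := by
          congr 1
          push_cast
          field_simp
      _ = 1/2 := Real.rpow_one _
  have hu2n : -1 < u₂ := by nlinarith
  have hu20 : u₂ < 0 := lt_of_lt_of_le h2r (by simp [Real.sqrt_nonneg])
  -- u₃ > 0
  have hu3 : 0 < u₃ := lt_trans (Real.sqrt_pos.mpr hε) h3l
  -- general sign machinery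
  have sign : ∀ u : ℝ,
      (0 < (2 * (n:ℝ)) * u ^ (2 * n - 1) + u ^ (2 * n) * (1 + u ^ (2 * n)) →
        0 < deriv (Q n ε) u) ∧
      ((2 * (n:ℝ)) * u ^ (2 * n - 1) + u ^ (2 * n) * (1 + u ^ (2 * n)) < 0 →
        deriv (Q n ε) u < 0) := by
    intro u
    have hpow : (0:ℝ) ≤ u ^ (2 * n) := (even_two_mul n).pow_nonneg u
    have hD2 : (0:ℝ) < (1 + u ^ (2 * n)) ^ 2 := by nlinarith
    rw [Q_deriv]
    constructor
    · intro hA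
      exact div_pos (mul_pos (Real.exp_pos u) hA) hD2
    · intro hA
      exact div_neg_of_neg_of_pos (mul_neg_of_pos_of_neg (Real.exp_pos u) hA) hD2
  have hodd : Odd (2 * n - 1) := ⟨n - 1, by omega⟩
  have hsplit : ∀ u : ℝ, u ^ (2 * n) = u ^ (2 * n - 1) * u := by
    intro u; rw [← pow_succ]; congr 1; omega
  refine ⟨?_, ?_, ?_⟩
  · -- u₁ : A > 0 since u^(2n-1) < 0 and (2n + u(1+u^(2n))) < 0
    refine (sign u₁).1 ?_
    have hneg : u₁ < 0 := by linarith
    have hoddpow : u₁ ^ (2 * n - 1) < 0 := hodd.pow_neg hneg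
    have hpow : (0:ℝ) ≤ u₁ ^ (2 * n) := (even_two_mul n).pow_nonneg u₁
    have hfac : 2 * (n:ℝ) + u₁ * (1 + u₁ ^ (2 * n)) < 0 := by
      nlinarith [mul_nonpos_of_nonpos_of_nonneg hneg.le hpow]
    have : (2 * (n:ℝ)) * u₁ ^ (2 * n - 1) + u₁ ^ (2 * n) * (1 + u₁ ^ (2 * n))
        = u₁ ^ (2 * n - 1) * (2 * (n:ℝ) + u₁ * (1 + u₁ ^ (2 * n))) := by
      rw [hsplit]; ring
    rw [this]
    exact mul_pos_of_neg_of_neg hoddpow hfac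
  · -- u₂ : A < 0 since u^(2n-1) < 0 and (2n + u(1+u^(2n))) > 0
    refine (sign u₂).2 ?_
    have hoddpow : u₂ ^ (2 * n - 1) < 0 := hodd.pow_neg hu20
    have habs : u₂ ^ (2 * n) < 1 := by
      have : u₂ ^ (2 * n) = |u₂| ^ (2 * n) := ((even_two_mul n).pow_abs u₂).symm
      rw [this]
      have : |u₂| < 1 := abs_lt.mpr ⟨hu2n, by linarith⟩
      exact pow_lt_one₀ (abs_nonneg _) this (by omega)
    have hpow : (0:ℝ) ≤ u₂ ^ (2 * n) := (even_two_mul n).pow_nonneg u₂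
    have hfac : 0 < 2 * (n:ℝ) + u₂ * (1 + u₂ ^ (2 * n)) := by nlinarith
    have : (2 * (n:ℝ)) * u₂ ^ (2 * n - 1) + u₂ ^ (2 * n) * (1 + u₂ ^ (2 * n))
        = u₂ ^ (2 * n - 1) * (2 * (n:ℝ) + u₂ * (1 + u₂ ^ (2 * n))) := by
      rw [hsplit]; ring
    rw [this]
    exact mul_neg_of_neg_of_pos hoddpow hfac
  · -- u₃ : everything positive
    refine (sign u₃).1 ?_
    have h1 : 0 < u₃ ^ (2 * n - 1) := pow_pos hu3 _
    have h2 : 0 < u₃ ^ (2 * n) := pow_pos hu3 _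
    nlinarith
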